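/- In a finite thick generalised m-gon with m odd, the two thickness parameters are equal: if every vertex of one bipartition class has valency q+1 and every vertex of the other class has valency r+1, then q = r. -/

import Mathlib

open SimpleGraph Walk

section Aux

variable {V : Type*} {G : SimpleGraph V}

/-- Splitting a walk at the first vertex satisfying a predicate that holds at the end. -/
lemma exists_prefix_meet : ∀ {x v : V} (p : G.Walk x v) (S : V → Prop), S v →
    ∃ (z : V) (p₁ : G.Walk x z) (p₂ : G.Walk z v), p = p₁.append p₂ ∧ S z ∧
      ∀ w ∈ p₁.support, S w → w = z := by
  intro x v p S hv
  induction p with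
  | nil => exact ⟨_, Walk.nil, Walk.nil, rfl, hv, fun w hw _ => by simpa using hw⟩
  | @cons a b v h p ih =>
    by_cases ha : S a
    · exact ⟨a, Walk.nil, Walk.cons h p, rfl, ha, by simp⟩
    · obtain ⟨z, p₁, p₂, hsplit, hz, hmin⟩ := ih hv
      refine ⟨z, Walk.cons h p₁, p₂, by rw [Walk.cons_append, hsplit], hz, ?_⟩
      intro w hw hSw
      rw [Walk.support_cons, List.mem_cons] at hw
      rcases hw with rfl | hw
      · exact absurd hSw ha
      · exact hmin w hw hSw

/-- Two distinct paths with the same endpoints yield a cycle of length at most the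
sum of their lengths. -/
lemma cycle_of_two_paths : ∀ {u v : V} (p q : G.Walk u v),
    p.IsPath → q.IsPath → p ≠ q →
    ∃ (a : V) (w : G.Walk a a), w.IsCycle ∧ w.length ≤ p.length + q.length := by
  intro u v p
  induction p with
  | nil =>
    intro q hp hq hne
    exact absurd (isPath_iff_eq_nil.mp hq).symm hne
  | @cons u x v h p' ih =>
    intro q hp hq hne
    cases q with
    | nil =>
      exact absurd (isPath_iff_eq_nil.mp hp) (by simp)
    | @cons _ y _ h'' q' =>
      rcases (Walk.cons_isPath_iff h p').mp hp with ⟨hp', hup'⟩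
      rcases (Walk.cons_isPath_iff h'' q').mp hq with ⟨hq', huq'⟩
      by_cases hxy : x = y
      · subst hxy
        have hpq' : p' ≠ q' := by
          rintro rfl
          exact hne rfl
        obtain ⟨a, w, hw, hlen⟩ := ih q' hp' hq' hpq'
        exact ⟨a, w, hw, by simp only [Walk.length_cons]; omega⟩
      · -- the two paths diverge at `u`.
        -- find the first vertex of `p'` lying on `q := cons h'' q'`.
        obtain ⟨z, p₁, p₂, hsplit, hz, hmin⟩ :=
          exists_prefix_meet p' (· ∈ (Walk.cons h'' q').support)
            (Walk.end_mem_support _)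
        classical
        set q₀ : G.Walk u v := Walk.cons h'' q' with hq₀
        have hz' : z ∈ q₀.support := hz
        set tq := q₀.takeUntil z hz' with htq
        have htqpath : tq.IsPath := hq.takeUntil hz'
        have hp₁path : p₁.IsPath := by
          rw [hsplit] at hp'
          exact hp'.of_append_left
        -- the edge s(u,x) does not occur on q₀
        have hux_not_q : s(u, x) ∉ q₀.edges := by
          intro hmem
          rw [hq₀, Walk.edges_cons, List.mem_cons] at hmem
          rcases hmem with heq | hmem
          · rw [Sym2.eq_iff] at heq
            rcases heq with ⟨-, rfl⟩ | ⟨rfl, rfl⟩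
            · exact hxy rfl
            · exact G.loopless.irrefl _ h''
          · exact huq' (Walk.fst_mem_support_of_mem_edges q' hmem)
        -- build the cycle
        set r : G.Walk x u := p₁.append tq.reverse with hr
        have hrpath : r.IsPath := by
          rw [Walk.isPath_def, hr, Walk.support_append]
          rw [Walk.isPath_def] at hp₁path
          refine List.Nodup.append hp₁path ?_ ?_
          · have := htqpath.reverse
            rw [Walk.isPath_def] at this
            exact this.tail
          · -- disjointness
            intro w hw1 hw2
            have hw2' : w ∈ tq.support ∧ w ≠ z := by
              have hnodup : tq.reverse.support.Nodup := by
                have := htqpath.reverse; rwa [Walk.isPath_def] at this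
              have hhead : tq.reverse.support = z :: tq.reverse.support.tail := by
                rw [← Walk.support_eq_cons]
              constructor
              · have : w ∈ tq.reverse.support := List.mem_of_mem_tail hw2
                rwa [Walk.support_reverse, List.mem_reverse] at this
              · intro rfl_eq
                subst rfl_eq
                rw [hhead] at hnodup
                exact (List.nodup_cons.mp hnodup).1 hw2
            have : w ∈ q₀.support := Walk.support_takeUntil_subset _ hz' hw2'.1
            exact hw2'.2 (hmin w hw1 this)
        have hedge : s(u, x) ∉ r.edges := by
          intro hmem
          rw [hr, Walk.edges_append, List.mem_append] at hmem
          rcases hmem with hmem | hmem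
          · have : u ∈ p₁.support := Walk.fst_mem_support_of_mem_edges p₁ hmem
            have : u ∈ p'.support := by
              rw [hsplit, Walk.mem_support_append_iff]; exact Or.inl this
            exact hup' this
          · rw [Walk.edges_reverse, List.mem_reverse] at hmem
            exact hux_not_q (Walk.edges_takeUntil_subset _ hz' hmem)
        refine ⟨u, Walk.cons h r, (Walk.cons_isCycle_iff r h).mpr ⟨hrpath, hedge⟩, ?_⟩
        have h1 : p₁.length ≤ p'.length := by
          rw [hsplit, Walk.length_append]; omega
        have h2 : tq.length ≤ q₀.length := Walk.length_takeUntil_le q₀ hz'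
        simp only [Walk.length_cons, hr, Walk.length_append, Walk.length_reverse]
        simp only [hq₀, Walk.length_cons] at h2 ⊢
        omega

end Aux


lemma walk_parity {V : Type*} {G : SimpleGraph V} (c : V → Bool)
    (hbip : ∀ u v : V, G.Adj u v → c u ≠ c v) :
    ∀ {u v : V} (w : G.Walk u v), (c u = c v ↔ Even w.length) := by
  intro u v w
  induction w with
  | nil => simp
  | @cons a b v h p ih =>
    have hab := hbip _ _ h
    rw [Walk.length_cons, Nat.even_add_one, ← ih]
    revert hab
    cases (c a) <;> cases (c b) <;> cases (c v) <;> simp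

/-- In a finite thick generalised `m`-gon with `m` odd (a connected bipartite graph of
diameter `m` and girth `2m`, all valencies at least `3`), the two thickness parameters are
equal: `q = r`. -/
theorem stmt13 {V : Type*} [Fintype V] (G : SimpleGraph V) [DecidableRel G.Adj]
    (m q r : ℕ) (hm : 3 ≤ m) (hodd : Odd m)
    (c : V → Bool) (hbip : ∀ u v : V, G.Adj u v → c u ≠ c v)
    (hconn : G.Connected)
    (hdiam : G.diam = m)
    (hgirth : G.girth = 2 * m)
    (hthick : ∀ v : V, 3 ≤ G.degree v)
    (hq : ∀ v : V, c v = true → G.degree v = q + 1)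
    (hr : ∀ v : V, c v = false → G.degree v = r + 1) :
    q = r := by
  classical
  obtain ⟨k, hk⟩ := hodd
  -- every cycle has length at least 2*m
  have hcyc : ∀ (a : V) (w : G.Walk a a), w.IsCycle → 2 * m ≤ w.length := by
    have hne : G.egirth ≠ ⊤ := by
      intro h
      have : G.girth = 0 := (SimpleGraph.girth_eq_zero).mpr
        ((SimpleGraph.egirth_eq_top).mp h)
      omega
    have hco : (G.girth : ℕ∞) = G.egirth := ENat.coe_toNat hne
    have heg : G.egirth = ((2 * m : ℕ) : ℕ∞) := by rw [← hco, hgirth]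
    intro a w hw
    have h1 : ((2 * m : ℕ) : ℕ∞) ≤ (w.length : ℕ∞) :=
      SimpleGraph.le_egirth.mp (le_of_eq heg.symm) a w hw
    exact_mod_cast h1
  have hnotwo : ∀ (a b : V) (p q' : G.Walk a b), p.IsPath → q'.IsPath →
      p.length ≤ m - 1 → q'.length ≤ m - 1 → p ≠ q' → False := by
    intro a b p q' hp hq' hlp hlq hne
    obtain ⟨a', w, hw, hlen⟩ := cycle_of_two_paths p q' hp hq' hne
    have h1 := hcyc a' w hw
    omega
  have hreach : ∀ u v : V, G.Reachable u v := hconn.preconnected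
  have hdistle : ∀ u v : V, G.dist u v ≤ m := by
    intro u v
    have h0 : G.diam ≠ 0 := by omega
    have h1 := SimpleGraph.dist_le_diam (G := G)
      (SimpleGraph.ediam_ne_top_of_diam_ne_zero h0) (u := u) (v := v)
    omega
  have hcd : ∀ u v : V, (c u = c v ↔ Even (G.dist u v)) := by
    intro u v
    obtain ⟨w, hw⟩ := (hreach u v).exists_walk_length_eq_dist
    rw [← hw]
    exact walk_parity c hbip w
  have hstep : ∀ x y z : V, G.dist x y = m → G.Adj x z → G.dist z y = m - 1 := by
    intro x y z hxy hadj
    have h1 : G.dist z y ≤ m := hdistle z y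
    have hxz1 : G.dist x z ≤ 1 := by
      have := SimpleGraph.dist_le (Walk.cons hadj Walk.nil)
      simpa using this
    have h2 : m ≤ 1 + G.dist z y := by
      have ht := hconn.dist_triangle (u := x) (v := z) (w := y)
      omega
    have hcxy : c x ≠ c y := by
      intro hcc
      have := (hcd x y).mp hcc
      rw [hxy] at this
      obtain ⟨t, _⟩ := this
      omega
    have hcxz : c x ≠ c z := hbip _ _ hadj
    have hczy : c z = c y := by
      revert hcxy hcxz
      cases (c x) <;> cases (c y) <;> cases (c z) <;> simp
    obtain ⟨t, ht⟩ := (hcd z y).mp hczy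
    omega
  -- the key counting lemma
  have key : ∀ x y : V, G.dist x y = m → G.degree x ≤ G.degree y := by
    intro x y hxy
    have hex : ∀ z, G.Adj x z → ∃ t, G.Adj y t ∧ G.dist z t = m - 2 := by
      intro z hz
      have hzy : G.dist z y = m - 1 := hstep x y z hxy hz
      obtain ⟨w, hw⟩ := (hreach z y).exists_walk_length_eq_dist
      rw [hzy] at hw
      have hwr : w.reverse.length = m - 1 := by
        rw [Walk.length_reverse]; exact hw
      cases hrev : w.reverse with
      | nil =>
        rw [hrev] at hwr
        simp at hwr
        omega
      | @cons _ t _ h' w2 =>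
        refine ⟨t, h', ?_⟩
        have hlen2 : w2.length = m - 2 := by
          rw [hrev] at hwr
          rw [Walk.length_cons] at hwr
          omega
        have hle : G.dist z t ≤ m - 2 := by
          have := SimpleGraph.dist_le w2.reverse
          rw [Walk.length_reverse, hlen2] at this
          exact this
        have hty : G.dist t y ≤ 1 := by
          have := SimpleGraph.dist_le (Walk.cons h'.symm Walk.nil)
          simpa using this
        have hge : m - 1 ≤ G.dist z t + 1 := by
          have ht2 := hconn.dist_triangle (u := z) (v := t) (w := y)
          omega
        omega
    choose f hf1 hf2 using hex
    set F : V → V := fun z => if h : G.Adj x z then f z h else z with hF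
    have hmaps : ∀ z ∈ G.neighborFinset x, F z ∈ G.neighborFinset y := by
      intro z hz
      rw [SimpleGraph.mem_neighborFinset] at hz ⊢
      rw [hF]
      simp only [dif_pos hz]
      exact hf1 z hz
    have hinj : Set.InjOn F (G.neighborFinset x) := by
      intro z hz z' hz' hFz
      rw [Finset.mem_coe, SimpleGraph.mem_neighborFinset] at hz hz'
      by_contra hne
      rw [hF] at hFz
      simp only [dif_pos hz, dif_pos hz'] at hFz
      set t := f z' hz' with htdef
      have hd1 : G.dist z t = m - 2 := by rw [← hFz] at *; exact hFz ▸ hf2 z hz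
      have hd2 : G.dist z' t = m - 2 := hf2 z' hz'
      -- build two distinct paths from x to t of length m-1
      obtain ⟨w1, hw1⟩ := (hreach z t).exists_walk_length_eq_dist
      obtain ⟨w2, hw2⟩ := (hreach z' t).exists_walk_length_eq_dist
      have hp1 : w1.IsPath := w1.isPath_of_length_eq_dist hw1
      have hp2 : w2.IsPath := w2.isPath_of_length_eq_dist hw2
      rw [hd1] at hw1
      rw [hd2] at hw2
      have hty : G.dist t y ≤ 1 := by
        have := SimpleGraph.dist_le (Walk.cons (hf1 z' hz').symm Walk.nil)
        simpa using this
      have hxt : m - 1 ≤ G.dist x t := by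
        have ht2 := hconn.dist_triangle (u := x) (v := t) (w := y)
        omega
      have hxnot : ∀ (a : V) (ww : G.Walk a t), ww.length = m - 2 → x ∉ ww.support := by
        intro a ww hlww hmem
        have : G.dist x t ≤ (ww.dropUntil x hmem).length := SimpleGraph.dist_le _
        have hdl : (ww.dropUntil x hmem).length ≤ ww.length :=
          Walk.length_dropUntil_le ww hmem
        omega
      have hP1 : (Walk.cons hz w1).IsPath :=
        (Walk.cons_isPath_iff hz w1).mpr ⟨hp1, hxnot z w1 hw1⟩
      have hP2 : (Walk.cons hz' w2).IsPath :=
        (Walk.cons_isPath_iff hz' w2).mpr ⟨hp2, hxnot z' w2 hw2⟩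
      have hPne : Walk.cons hz w1 ≠ Walk.cons hz' w2 := by
        intro heq
        have hsup := congrArg Walk.support heq
        rw [Walk.support_cons, Walk.support_cons, w1.support_eq_cons,
          w2.support_eq_cons] at hsup
        rw [List.cons.injEq, List.cons.injEq] at hsup
        exact hne hsup.2.1
      exact hnotwo x t (Walk.cons hz w1) (Walk.cons hz' w2) hP1 hP2
        (by rw [Walk.length_cons]; omega) (by rw [Walk.length_cons]; omega) hPne
    have := Finset.card_le_card_of_injOn F hmaps hinj
    rwa [← SimpleGraph.card_neighborFinset_eq_degree,
      ← SimpleGraph.card_neighborFinset_eq_degree]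
  -- conclude
  have : Nonempty V := hconn.nonempty
  obtain ⟨x, y, hxy⟩ := SimpleGraph.exists_dist_eq_diam (G := G)
  rw [hdiam] at hxy
  have hdeg : G.degree x = G.degree y :=
    le_antisymm (key x y hxy) (key y x (by rwa [SimpleGraph.dist_comm]))
  have hcxy : c x ≠ c y := by
    intro hcc
    have := (hcd x y).mp hcc
    rw [hxy] at this
    obtain ⟨t, _⟩ := this
    omega
  cases hcx : c x with
  | true =>
    have hcy : c y = false := by revert hcxy; cases (c y) <;> simp [hcx]
    have e1 := hq x hcx
    have e2 := hr y hcy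
    omega
  | false =>
    have hcy : c y = true := by revert hcxy; cases (c y) <;> simp [hcx]
    have e1 := hr x hcx
    have e2 := hq y hcy
    omega
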